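/- Let t_L, t_R, E ∈ ℂ and let ψ : ℤ → ℂ be N-periodic (ψ_{n+N} = ψ_n) satisfying t_R ψ_{n-1} + t_L ψ_{n+1} = E ψ_n for all n. Define G(z) = ∑_{m=1}^{N} ψ_m z^m. Then (t_R z^2 - E z + t_L)·G(z) = z·(t_L ψ_1 - z t_R ψ_N)·(1 - z^N) as polynomials in ℂ[z]. -/

import Mathlib

open Polynomial

theorem hatano_nelson_pbc_generating_function
    (N : ℕ) (hN : 1 ≤ N) (tL tR E : ℂ) (ψ : ℤ → ℂ)
    (hper : ∀ n : ℤ, ψ (n + N) = ψ n)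
    (hrec : ∀ n : ℤ, tR * ψ (n - 1) + tL * ψ (n + 1) = E * ψ n) :
    (C tR * X ^ 2 - C E * X + C tL) *
        (∑ m ∈ Finset.Icc 1 N, C (ψ (m : ℤ)) * X ^ m)
      = X * (C tL * C (ψ 1) - X * C tR * C (ψ (N : ℤ))) * (1 - X ^ N) := by
  set g : ℕ → ℂ[X] := fun m =>
    C tL * C (ψ m) * X ^ m - C tR * C (ψ ((m : ℤ) - 1)) * X ^ (m + 1) with hg
  have hterm : ∀ m : ℕ, (C tR * X ^ 2 - C E * X + C tL) * (C (ψ (m : ℤ)) * X ^ m)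
      = g m - g (m + 1) := by
    intro m
    have h := hrec m
    have hE : (C E : ℂ[X]) * C (ψ (m : ℤ))
        = C tR * C (ψ ((m : ℤ) - 1)) + C tL * C (ψ ((m : ℤ) + 1)) := by
      simp only [← C_mul, ← C_add, h]
    have h1 : ((m + 1 : ℕ) : ℤ) - 1 = (m : ℤ) := by push_cast; ring
    have h2 : ((m + 1 : ℕ) : ℤ) = (m : ℤ) + 1 := by push_cast; ring
    simp only [hg, h1, h2]
    have : (C tR * X ^ 2 - C E * X + C tL) * (C (ψ (m : ℤ)) * X ^ m)
        = C tR * C (ψ (m : ℤ)) * X ^ (m + 2) - (C E * C (ψ (m : ℤ))) * X ^ (m + 1)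
          + C tL * C (ψ (m : ℤ)) * X ^ m := by ring
    rw [this, hE]; ring
  rw [Finset.mul_sum]
  have : ∀ m ∈ Finset.Icc 1 N, (C tR * X ^ 2 - C E * X + C tL) * (C (ψ (m : ℤ)) * X ^ m)
      = g m - g (m + 1) := fun m _ => hterm m
  rw [Finset.sum_congr rfl this, ← Finset.Ico_add_one_right_eq_Icc, Finset.sum_Ico_eq_sum_range]
  have htel : ∑ i ∈ Finset.range (N + 1 - 1), (g (1 + i) - g (1 + i + 1))
      = g 1 - g (1 + N) := by
    simpa only [Nat.add_sub_cancel, add_zero, add_assoc] using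
      Finset.sum_range_sub' (fun i => g (1 + i)) N
  rw [htel]
  have hψ0 : ψ ((1 : ℤ) - 1) = ψ (N : ℤ) := by
    have := hper 0; simpa using this.symm
  have hψN1 : ψ (((1 + N : ℕ) : ℤ)) = ψ 1 := by
    have := hper 1; push_cast; simpa using this
  have hψN : ((((1 + N : ℕ)) : ℤ)) - 1 = (N : ℤ) := by push_cast; ring
  simp only [hg, hψ0, hψN1, hψN, pow_one, Nat.cast_one]
  ring
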